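/- arXiv:2310.05261 — 3 statements merged into one kernel-verified Lean document; each statement's English description precedes it below -/
import Mathlib

section
/- For all t ≥ 0, S(t) ⊆ S_s, where S(t) is the 0-superlevel set of the time-varying soft-maximum composite function h(·,t) and S_s is the safe set. -/
noncomputable def softmax (N : ℕ) (κ : ℝ) (z : Fin N → ℝ) : ℝ :=
  (1 / κ) * Real.log (∑ i : Fin N, Real.exp (κ * z i)) - Real.log N / κ

lemma exists_nonneg_of_softmax_nonneg {N : ℕ} (hN : 1 ≤ N) {κ : ℝ} (hκ : 0 < κ)
    {z : Fin N → ℝ} (hs : 0 ≤ softmax N κ z) : ∃ i, 0 ≤ z i := by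
  by_contra hc
  push_neg at hc
  have hne : (Finset.univ : Finset (Fin N)).Nonempty := by
    simpa [Finset.univ_nonempty_iff] using Fin.pos_iff_nonempty.mp hN
  have hsum : ∑ i : Fin N, Real.exp (κ * z i) < N := by
    calc ∑ i : Fin N, Real.exp (κ * z i) < ∑ _i : Fin N, (1:ℝ) := by
          apply Finset.sum_lt_sum_of_nonempty hne
          intro i _
          exact Real.exp_lt_one_iff.mpr (mul_neg_of_pos_of_neg hκ (hc i))
      _ = N := by simp
  have hpos : 0 < ∑ i : Fin N, Real.exp (κ * z i) :=
    Finset.sum_pos (fun i _ => Real.exp_pos _) hne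
  have hlog : Real.log (∑ i : Fin N, Real.exp (κ * z i)) < Real.log N :=
    Real.log_lt_log hpos hsum
  have : softmax N κ z < 0 := by
    unfold softmax
    rw [sub_neg, one_div, inv_mul_eq_div, div_lt_div_iff_of_pos_right hκ]
    exact hlog
  linarith

theorem timevarying_softmax_safe (n N : ℕ) (hN : 1 ≤ N) (Ts κ : ℝ) (hTs : 0 < Ts)
    (hκ : 0 < κ) (Ss : Set (Fin n → ℝ)) (b : ℤ → (Fin n → ℝ) → ℝ)
    (hb : ∀ k : ℤ, {x | 0 ≤ b k x} ⊆ Ss)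
    (η : ℝ → ℝ) (hη : ∀ τ : ℝ, η τ ∈ Set.Icc (0:ℝ) 1)
    (h : (Fin n → ℝ) → ℝ → ℝ)
    (hh : ∀ (x : Fin n → ℝ) (t : ℝ), 0 ≤ t →
      h x t = softmax N κ (fun i : Fin N =>
        if (i : ℕ) < N - 1 then b (⌊t / Ts⌋ - 1 - (i : ℕ)) x
        else η (t / Ts - ⌊t / Ts⌋) * b ⌊t / Ts⌋ x
          + (1 - η (t / Ts - ⌊t / Ts⌋)) * b (⌊t / Ts⌋ - N) x)) :
    ∀ t : ℝ, 0 ≤ t → {x : Fin n → ℝ | 0 ≤ h x t} ⊆ Ss := by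
  intro t ht x hx
  have hx' : 0 ≤ h x t := hx
  rw [hh x t ht] at hx'
  obtain ⟨i, hi⟩ := exists_nonneg_of_softmax_nonneg hN hκ hx'
  by_cases hcase : (i : ℕ) < N - 1
  · rw [if_pos hcase] at hi
    exact hb _ hi
  · rw [if_neg hcase] at hi
    obtain ⟨h0, h1⟩ := hη (t / Ts - ⌊t / Ts⌋)
    by_cases hbk : 0 ≤ b ⌊t / Ts⌋ x
    · exact hb _ hbk
    · have : 0 ≤ b (⌊t / Ts⌋ - N) x := by
        push_neg at hbk
        by_contra hbn
        push_neg at hbn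
        have p1 : η (t / Ts - ⌊t / Ts⌋) * b ⌊t / Ts⌋ x ≤ 0 :=
          mul_nonpos_of_nonneg_of_nonpos h0 hbk.le
        have p2 : (1 - η (t / Ts - ⌊t / Ts⌋)) * b (⌊t / Ts⌋ - N) x ≤ 0 :=
          mul_nonpos_of_nonneg_of_nonpos (by linarith) hbn.le
        have heq : η (t / Ts - ⌊t / Ts⌋) * b ⌊t / Ts⌋ x = 0 := by linarith
        rcases mul_eq_zero.mp (le_antisymm p1 (by linarith)) with h' | h'
        · have : (1 - η (t / Ts - ⌊t / Ts⌋)) * b (⌊t / Ts⌋ - N) x < 0 := by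
            apply mul_neg_of_pos_of_neg (by linarith) hbn
          linarith
        · linarith
      exact hb _ this
end

section
/- For the order-r smoothstep polynomial p(t) = t^{r+1} Σ_{j=0}^{r} C(r+j,j) C(2r+1, r-j) (-t)^j, all derivatives of order 1 through r vanish at t = 1. -/
open Polynomial Finset

noncomputable def smoothstepPoly (r : ℕ) (t : ℝ) : ℝ :=
  ∑ j ∈ Finset.range (r + 1),
    (-1) ^ j * ((r + j).choose j : ℝ) * ((2 * r + 1).choose (r - j) : ℝ) * t ^ (r + 1 + j)

private lemma key_choose (r j : ℕ) (hj : j ≤ r) :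
    ((r+1+j : ℕ):ℝ) * ((r+j).choose j : ℝ) * ((2*r+1).choose (r-j) : ℝ)
      = ((r+1 : ℕ):ℝ) * ((2*r+1).choose r : ℝ) * (r.choose j : ℝ) := by
  have h1 : j ≤ r + j := Nat.le_add_left _ _
  have h2 : r - j ≤ 2*r+1 := by omega
  have h3 : r ≤ 2*r+1 := by omega
  rw [Nat.cast_choose ℝ h1, Nat.cast_choose ℝ h2, Nat.cast_choose ℝ h3, Nat.cast_choose ℝ hj]
  have e1 : r + j - j = r := by omega
  have e2 : 2*r+1 - (r-j) = r+1+j := by omega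
  have e3 : 2*r+1 - r = r+1 := by omega
  rw [e1, e2, e3]
  have f1 : (r+1+j).factorial = (r+1+j) * (r+j).factorial := by
    have : r+1+j = (r+j)+1 := by omega
    rw [this, Nat.factorial_succ]
  have f2 : (r+1).factorial = (r+1) * r.factorial := Nat.factorial_succ r
  rw [f1, f2]
  push_cast
  have hrj : ((r+j).factorial : ℝ) ≠ 0 := by exact_mod_cast (Nat.factorial_ne_zero _)
  field_simp

private noncomputable def ssP (r : ℕ) : ℝ[X] :=
  ∑ j ∈ Finset.range (r + 1),
    C ((-1) ^ j * ((r + j).choose j : ℝ) * ((2 * r + 1).choose (r - j) : ℝ)) * X ^ (r + 1 + j)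

private lemma ssP_eval (r : ℕ) (t : ℝ) : (ssP r).eval t = smoothstepPoly r t := by
  simp [ssP, smoothstepPoly, eval_finset_sum]

private lemma expand_pow (r : ℕ) :
    ((X : ℝ[X]) * (1 - X)) ^ r
      = ∑ j ∈ Finset.range (r + 1), C ((-1) ^ j * (r.choose j : ℝ)) * X ^ (r + j) := by
  rw [mul_pow]
  have : ((1 : ℝ[X]) - X) ^ r = (-X + 1) ^ r := by ring
  rw [this, add_pow, Finset.mul_sum]
  refine Finset.sum_congr rfl fun j hj => ?_
  rw [neg_pow]
  simp only [one_pow, mul_one, C_mul, map_pow, map_neg, map_one, map_natCast]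
  ring

private lemma deriv_ssP (r : ℕ) :
    derivative (ssP r)
      = C (((r+1 : ℕ):ℝ) * ((2*r+1).choose r : ℝ)) * ((X : ℝ[X]) * (1 - X)) ^ r := by
  rw [expand_pow, Finset.mul_sum, ssP, derivative_sum]
  refine Finset.sum_congr rfl fun j hj => ?_
  have hj' : j ≤ r := by simpa using Nat.lt_succ_iff.mp (Finset.mem_range.mp hj)
  rw [derivative_C_mul, derivative_X_pow]
  have e : r + 1 + j - 1 = r + j := by omega
  rw [e, ← mul_assoc, ← C_mul, ← mul_assoc, ← C_mul]
  congr 1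
  rw [C_inj]
  have h := key_choose r j hj'
  push_cast at h ⊢
  linear_combination ((-1:ℝ)^j) * h

private lemma iteratedDeriv_eval (Q : ℝ[X]) (n : ℕ) :
    iteratedDeriv n (fun t => Q.eval t) = fun t => (derivative^[n] Q).eval t := by
  induction n generalizing Q with
  | zero => simp
  | succ n ih =>
    rw [iteratedDeriv_succ', Function.iterate_succ_apply, ← ih (derivative Q)]
    have h : (deriv fun t => Q.eval t) = fun t => (derivative Q).eval t :=
      funext fun t => Polynomial.deriv Q
    rw [h]

theorem smoothstepPoly_iteratedDeriv_one (r : ℕ) (hr : 1 ≤ r) :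
    ∀ i : ℕ, 1 ≤ i → i ≤ r → iteratedDeriv i (smoothstepPoly r) 1 = 0 := by
  intro i hi1 hir
  have hf : smoothstepPoly r = fun t => (ssP r).eval t := by
    funext t; rw [ssP_eval]
  obtain ⟨m, rfl⟩ : ∃ m, i = m + 1 := ⟨i - 1, by omega⟩
  rw [hf, iteratedDeriv_eval]
  simp only [Function.iterate_succ_apply, deriv_ssP]
  have hdvd : ((X : ℝ[X]) - 1) ^ r ∣
      C (((r+1 : ℕ):ℝ) * ((2*r+1).choose r : ℝ)) * ((X : ℝ[X]) * (1 - X)) ^ r := by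
    refine Dvd.dvd.mul_left ?_ _
    refine pow_dvd_pow_of_dvd ⟨-X, by ring⟩ r
  have h2 := Polynomial.pow_sub_dvd_iterate_derivative_of_pow_dvd m hdvd
  obtain ⟨q, hq⟩ := h2
  rw [hq, eval_mul, eval_pow, eval_sub, eval_X, eval_one, sub_self]
  rw [zero_pow (by omega : r - m ≠ 0), zero_mul]
end

section
/- The derivative of the order-r smoothstep polynomial satisfies p'(t) = (2r+1) C(2r, r) t^r (1-t)^r. -/
lemma smoothstep_key_nat (r j : ℕ) (hj : j ≤ r) :
    (r + 1 + j) * ((r + j).choose j) * ((2 * r + 1).choose (r - j))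
      = (2 * r + 1) * ((2 * r).choose r) * (r.choose j) := by
  have hpos : 0 < j.factorial * r.factorial * (r - j).factorial :=
    Nat.mul_pos (Nat.mul_pos j.factorial_pos r.factorial_pos) (r - j).factorial_pos
  apply Nat.eq_of_mul_eq_mul_right hpos
  have h1 : (r + j).choose j * j.factorial * r.factorial = (r + j).factorial := by
    have := Nat.choose_mul_factorial_mul_factorial (Nat.le_add_left j r)
    simpa [Nat.add_sub_cancel] using this
  have hfac : (r + 1 + j) * (r + j).factorial = (r + 1 + j).factorial := by
    have h : r + 1 + j = (r + j) + 1 := by omega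
    rw [h, Nat.factorial_succ]
  have h2 : (2 * r + 1).choose (r - j) * (r - j).factorial * (r + 1 + j).factorial
      = (2 * r + 1).factorial := by
    have hle : r - j ≤ 2 * r + 1 := by omega
    have := Nat.choose_mul_factorial_mul_factorial hle
    have heq : 2 * r + 1 - (r - j) = r + 1 + j := by omega
    rwa [heq] at this
  have h3 : r.choose j * j.factorial * (r - j).factorial = r.factorial :=
    Nat.choose_mul_factorial_mul_factorial hj
  have h4 : (2 * r).choose r * r.factorial * r.factorial = (2 * r).factorial := by
    have := Nat.choose_mul_factorial_mul_factorial (show r ≤ 2 * r by omega)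
    have heq : 2 * r - r = r := by omega
    rwa [heq] at this
  calc (r + 1 + j) * ((r + j).choose j) * ((2 * r + 1).choose (r - j))
        * (j.factorial * r.factorial * (r - j).factorial)
      = (r + 1 + j) * ((r + j).choose j * j.factorial * r.factorial)
          * ((2 * r + 1).choose (r - j) * (r - j).factorial) := by ring
    _ = ((r + 1 + j) * (r + j).factorial)
          * ((2 * r + 1).choose (r - j) * (r - j).factorial) := by rw [h1]
    _ = (2 * r + 1).choose (r - j) * (r - j).factorial * (r + 1 + j).factorial := by
          rw [hfac]; ring
    _ = (2 * r + 1).factorial := h2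
    _ = (2 * r + 1) * (2 * r).factorial := by rw [Nat.factorial_succ]
    _ = (2 * r + 1) * ((2 * r).choose r * r.factorial * r.factorial) := by rw [h4]
    _ = (2 * r + 1) * ((2 * r).choose r)
          * ((r.choose j * j.factorial * (r - j).factorial) * r.factorial) := by rw [h3]; ring
    _ = (2 * r + 1) * ((2 * r).choose r) * (r.choose j)
          * (j.factorial * r.factorial * (r - j).factorial) := by ring

lemma smoothstep_key (r j : ℕ) (hj : j ≤ r) :
    ((r + 1 + j : ℕ) : ℝ) * ((r + j).choose j : ℝ) * ((2 * r + 1).choose (r - j) : ℝ)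
      = (2 * r + 1 : ℝ) * ((2 * r).choose r : ℝ) * (r.choose j : ℝ) := by
  have := smoothstep_key_nat r j hj
  have := congrArg (fun n : ℕ => (n : ℝ)) this
  push_cast at this
  convert this using 2 <;> push_cast <;> ring

theorem smoothstepPoly_deriv (r : ℕ) (hr : 1 ≤ r) (t : ℝ) :
    deriv (smoothstepPoly r) t =
      (2 * r + 1 : ℝ) * ((2 * r).choose r : ℝ) * t ^ r * (1 - t) ^ r := by
  have hD : HasDerivAt (smoothstepPoly r)
      (∑ j ∈ Finset.range (r + 1),
        (-1) ^ j * ((r + j).choose j : ℝ) * ((2 * r + 1).choose (r - j) : ℝ)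
          * (((r + 1 + j : ℕ) : ℝ) * t ^ (r + j))) t := by
    have : ∀ j ∈ Finset.range (r + 1),
        HasDerivAt (fun s : ℝ => (-1) ^ j * ((r + j).choose j : ℝ)
            * ((2 * r + 1).choose (r - j) : ℝ) * s ^ (r + 1 + j))
          ((-1) ^ j * ((r + j).choose j : ℝ) * ((2 * r + 1).choose (r - j) : ℝ)
            * (((r + 1 + j : ℕ) : ℝ) * t ^ (r + j))) t := by
      intro j _
      have h := (hasDerivAt_pow (r + 1 + j) t)
      have hexp : r + 1 + j - 1 = r + j := by omega
      rw [hexp] at h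
      simpa [mul_assoc] using h.const_mul
        ((-1 : ℝ) ^ j * ((r + j).choose j : ℝ) * ((2 * r + 1).choose (r - j) : ℝ))
    have h := HasDerivAt.fun_sum this
    exact h
  rw [hD.deriv]
  have hbin : (1 - t) ^ r = ∑ k ∈ Finset.range (r + 1),
      (-t) ^ k * 1 ^ (r - k) * (r.choose k : ℝ) := by
    rw [show (1 - t) = -t + 1 by ring, add_pow]
  rw [hbin, Finset.mul_sum]
  apply Finset.sum_congr rfl
  intro j hj
  have hj' : j ≤ r := by simpa [Nat.lt_succ_iff] using Finset.mem_range.mp hj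
  have hkey := smoothstep_key r j hj'
  have : ((r + 1 + j : ℕ) : ℝ) * ((r + j).choose j : ℝ) * ((2 * r + 1).choose (r - j) : ℝ)
      * ((-1) ^ j * t ^ (r + j))
      = (2 * r + 1 : ℝ) * ((2 * r).choose r : ℝ) * (r.choose j : ℝ)
        * ((-1) ^ j * t ^ (r + j)) := by rw [hkey]
  calc (-1 : ℝ) ^ j * ((r + j).choose j : ℝ) * ((2 * r + 1).choose (r - j) : ℝ)
        * (((r + 1 + j : ℕ) : ℝ) * t ^ (r + j))
      = ((r + 1 + j : ℕ) : ℝ) * ((r + j).choose j : ℝ) * ((2 * r + 1).choose (r - j) : ℝ)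
        * ((-1) ^ j * t ^ (r + j)) := by ring
    _ = (2 * r + 1 : ℝ) * ((2 * r).choose r : ℝ) * (r.choose j : ℝ)
        * ((-1) ^ j * t ^ (r + j)) := this
    _ = (2 * r + 1 : ℝ) * ((2 * r).choose r : ℝ) * t ^ r
        * ((-t) ^ j * 1 ^ (r - j) * (r.choose j : ℝ)) := by
          rw [neg_pow, one_pow, pow_add]; ring
end
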